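/- arXiv:2601.05928 — 2 statements merged into one kernel-verified Lean document; each statement's English description precedes it below -/
import Mathlib

section
/- Autonomous moment-matching dilation: Let H and K be Hermitian N × N complex matrices and L := −iH + K. Let F be a d_A × d_A complex matrix and r, l ∈ ℂ^{d_A} satisfy the moment-matching condition l† F^k r = 1 for every integer k ≥ 0. Define the dilated generator H̃ := I_A ⊗ H + i F ⊗ K on ℂ^{d_A} ⊗ ℂ^N. Then for all t ≥ 0: exp(t L) = (l† ⊗ I_N) · exp(−i t H̃) · (r ⊗ I_N). -/
open Matrix Kronecker Nat

noncomputable def readL {dA N : ℕ} (l : Fin dA → ℂ) :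
    Matrix (Fin N) (Fin dA × Fin N) ℂ :=
  Matrix.of fun i p => star (l p.1) * (if p.2 = i then 1 else 0)

noncomputable def embedR {dA N : ℕ} (r : Fin dA → ℂ) :
    Matrix (Fin dA × Fin N) (Fin N) ℂ :=
  Matrix.of fun p i => r p.1 * (if p.2 = i then 1 else 0)

/-- The dilated Hamiltonian `H̃ := I_A ⊗ H + (i F) ⊗ K`. -/
noncomputable def dilH {dA N : ℕ} (F : Matrix (Fin dA) (Fin dA) ℂ)
    (H K : Matrix (Fin N) (Fin N) ℂ) :
    Matrix (Fin dA × Fin N) (Fin dA × Fin N) ℂ :=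
  (1 : Matrix (Fin dA) (Fin dA) ℂ) ⊗ₖ H + (Complex.I • F) ⊗ₖ K

lemma one_kron_mul_embedR {dA N : ℕ} (A : Matrix (Fin N) (Fin N) ℂ) (v : Fin dA → ℂ) :
    ((1 : Matrix (Fin dA) (Fin dA) ℂ) ⊗ₖ A) * embedR (N := N) v = embedR (N := N) v * A := by
  ext p j
  simp [Matrix.mul_apply, embedR, Matrix.kroneckerMap_apply, Matrix.one_apply,
    Fintype.sum_prod_type, mul_ite, ite_mul, mul_comm]

lemma kron_mul_embedR {dA N : ℕ} (F : Matrix (Fin dA) (Fin dA) ℂ)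
    (B : Matrix (Fin N) (Fin N) ℂ) (v : Fin dA → ℂ) :
    (F ⊗ₖ B) * embedR (N := N) v = embedR (N := N) (F *ᵥ v) * B := by
  ext p j
  simp only [Matrix.mul_apply, embedR, Matrix.kroneckerMap_apply, Matrix.of_apply,
    Matrix.mulVec, dotProduct, Fintype.sum_prod_type, mul_ite, ite_mul,
    mul_zero, zero_mul, mul_one, Finset.sum_ite_eq, Finset.sum_ite_eq',
    Finset.mem_univ, if_true, Finset.sum_mul]
  exact Finset.sum_congr rfl fun x _ => by ring

lemma readL_mul_embedR {dA N : ℕ} (l v : Fin dA → ℂ) :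
    readL (N := N) l * embedR (N := N) v = (star l ⬝ᵥ v) • (1 : Matrix (Fin N) (Fin N) ℂ) := by
  ext i j
  simp only [Matrix.mul_apply, readL, embedR, Matrix.of_apply, dotProduct,
    Fintype.sum_prod_type, mul_ite, ite_mul, mul_zero, zero_mul, mul_one, one_mul,
    Finset.sum_ite_eq, Finset.sum_ite_eq', Finset.mem_univ, if_true,
    Matrix.smul_apply, Matrix.one_apply, smul_eq_mul, Pi.star_apply]
  by_cases h : i = j
  · simp [h, Finset.mul_sum, Finset.sum_mul, mul_comm]
  · simp [h, Ne.symm h]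

lemma key_lemma {dA N : ℕ} (F : Matrix (Fin dA) (Fin dA) ℂ)
    (A B : Matrix (Fin N) (Fin N) ℂ) (r l : Fin dA → ℂ)
    (hmm : ∀ k : ℕ, star l ⬝ᵥ (F ^ k *ᵥ r) = 1) :
    ∀ n k : ℕ,
      readL (N := N) l * (((1 : Matrix (Fin dA) (Fin dA) ℂ) ⊗ₖ A + F ⊗ₖ B) ^ n
        * embedR (N := N) (F ^ k *ᵥ r)) = (A + B) ^ n := by
  intro n
  induction n with
  | zero =>
      intro k
      simp [readL_mul_embedR, hmm k]
  | succ n ih =>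
      intro k
      set G := (1 : Matrix (Fin dA) (Fin dA) ℂ) ⊗ₖ A + F ⊗ₖ B with hGdef
      have h1 : G * embedR (N := N) (F ^ k *ᵥ r)
          = embedR (N := N) (F ^ k *ᵥ r) * A + embedR (N := N) (F ^ (k + 1) *ᵥ r) * B := by
        rw [hGdef]
        rw [Matrix.add_mul, one_kron_mul_embedR, kron_mul_embedR, Matrix.mulVec_mulVec]
        rw [← _root_.pow_succ']
      rw [_root_.pow_succ, Matrix.mul_assoc, h1, Matrix.mul_add, Matrix.mul_add,
        ← Matrix.mul_assoc (G ^ n) (embedR (F ^ k *ᵥ r)) A,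
        ← Matrix.mul_assoc (G ^ n) (embedR (F ^ (k + 1) *ᵥ r)) B,
        ← Matrix.mul_assoc (readL l) (G ^ n * embedR (F ^ k *ᵥ r)) A,
        ← Matrix.mul_assoc (readL l) (G ^ n * embedR (F ^ (k + 1) *ᵥ r)) B,
        ih k, ih (k + 1), ← Matrix.mul_add, ← _root_.pow_succ]

/-- The sandwiching map `M ↦ readL l * M * embedR r` as a linear map. -/
noncomputable def sandwich {dA N : ℕ} (l r : Fin dA → ℂ) :
    Matrix (Fin dA × Fin N) (Fin dA × Fin N) ℂ →ₗ[ℂ] Matrix (Fin N) (Fin N) ℂ where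
  toFun M := readL (N := N) l * M * embedR (N := N) r
  map_add' X Y := by
    show readL (N := N) l * (X + Y) * embedR (N := N) r = readL (N := N) l * X * embedR (N := N) r + readL (N := N) l * Y * embedR (N := N) r
    rw [Matrix.mul_add, Matrix.add_mul]
  map_smul' c X := by
    show readL (N := N) l * (c • X) * embedR (N := N) r = c • (readL (N := N) l * X * embedR (N := N) r)
    rw [Matrix.mul_smul, Matrix.smul_mul]

/-- **Autonomous moment-matching dilation.** For Hermitian `H, K`,
`L := −iH + K`, and a moment-matching triple `(F, r, l)`, the non-unitary semigroup
`exp(t L)` is recovered from the dilated unitary evolution: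
`exp(t L) = (l† ⊗ I_N) exp(−i t H̃) (r ⊗ I_N)` for all `t ≥ 0`. -/
theorem autonomous_dilation (dA N : ℕ) (hdA : 1 ≤ dA) (hN : 1 ≤ N)
    (H K : Matrix (Fin N) (Fin N) ℂ) (hH : H.IsHermitian) (hK : K.IsHermitian)
    (F : Matrix (Fin dA) (Fin dA) ℂ) (r l : Fin dA → ℂ)
    (hmm : ∀ k : ℕ, star l ⬝ᵥ (F ^ k *ᵥ r) = 1)
    (t : ℝ) (ht : 0 ≤ t) :
    NormedSpace.exp ((t : ℂ) • (-Complex.I • H + K)) =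
      readL (N := N) l * (NormedSpace.exp ((-Complex.I * (t : ℂ)) • dilH F H K) :
        Matrix (Fin dA × Fin N) (Fin dA × Fin N) ℂ) * embedR (N := N) r := by
  letI : NormedRing (Matrix (Fin N) (Fin N) ℂ) := Matrix.linftyOpNormedRing
  letI : NormedAlgebra ℂ (Matrix (Fin N) (Fin N) ℂ) := Matrix.linftyOpNormedAlgebra
  letI : NormedRing (Matrix (Fin dA × Fin N) (Fin dA × Fin N) ℂ) := Matrix.linftyOpNormedRing
  letI : NormedAlgebra ℂ (Matrix (Fin dA × Fin N) (Fin dA × Fin N) ℂ) :=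
    Matrix.linftyOpNormedAlgebra
  set A : Matrix (Fin N) (Fin N) ℂ := (-Complex.I * (t : ℂ)) • H with hA
  set B : Matrix (Fin N) (Fin N) ℂ := (t : ℂ) • K with hB
  have hscal : -Complex.I * (t : ℂ) * Complex.I = (t : ℂ) := by
    ring_nf; rw [Complex.I_sq]; ring
  have hG : (-Complex.I * (t : ℂ)) • dilH F H K
      = (1 : Matrix (Fin dA) (Fin dA) ℂ) ⊗ₖ A + F ⊗ₖ B := by
    rw [dilH, smul_add, Matrix.smul_kronecker, smul_smul, hscal,
      ← Matrix.kronecker_smul, ← Matrix.kronecker_smul, hA, hB]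
  have hAB : (t : ℂ) • (-Complex.I • H + K) = A + B := by
    rw [smul_add, hA, hB, smul_smul]; ring_nf
  rw [hG, hAB]
  set G : Matrix (Fin dA × Fin N) (Fin dA × Fin N) ℂ :=
    (1 : Matrix (Fin dA) (Fin dA) ℂ) ⊗ₖ A + F ⊗ₖ B with hGdef
  have hsum : Summable fun n : ℕ => (n !⁻¹ : ℂ) • G ^ n :=
    NormedSpace.expSeries_summable' (𝕂 := ℂ) G
  set Phi : Matrix (Fin dA × Fin N) (Fin dA × Fin N) ℂ →ₗ[ℂ] Matrix (Fin N) (Fin N) ℂ :=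
    sandwich l r with hPd
  have hPc : Continuous Phi := Phi.continuous_of_finiteDimensional
  have h2 : ∑' n : ℕ, Phi ((n !⁻¹ : ℂ) • G ^ n) = Phi (∑' n : ℕ, (n !⁻¹ : ℂ) • G ^ n) :=
    (hsum.hasSum.map Phi.toAddMonoidHom hPc).tsum_eq
  have hR : readL (N := N) l * NormedSpace.exp G * embedR (N := N) r = Phi (NormedSpace.exp G) := rfl
  have hPn : ∀ n : ℕ, Phi (G ^ n) = (A + B) ^ n := fun n => by
    have hkey := key_lemma F A B r l hmm n 0
    rw [_root_.pow_zero, Matrix.one_mulVec] at hkey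
    show readL (N := N) l * G ^ n * embedR (N := N) r = (A + B) ^ n
    rw [Matrix.mul_assoc]
    exact hkey
  rw [hR]
  simp only [NormedSpace.exp_eq_tsum ℂ]
  rw [← h2]
  refine tsum_congr fun n => ?_
  rw [_root_.map_smul, hPn n]
end

section
/- First-column expansion of the interaction unitary: Let S be a finite nonempty index set, G_α ∈ ℂ^{N×N} for α ∈ S, Ω := Σ_{α∈S} ( e_α e_0† ⊗ G_α − e_0 e_α† ⊗ G_α† ), R² := Σ_{α∈S} G_α† G_α, U := exp(Ω), Ξ := I − (1/2) R² + (1/24) (R²)², and Λ := I − (1/6) R². Then there exists a constant C > 0 depending only on |S| such that, whenever g := max_{α∈S} ‖G_α‖ ≤ 1, for all ψ ∈ ℂ^N: ‖ U (e_0 ⊗ ψ) − [ e_0 ⊗ (Ξ ψ) + Σ_{α∈S} e_α ⊗ (G_α Λ ψ) ] ‖ ≤ C · g⁵ · ‖ψ‖. -/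
open Matrix Kronecker

/-- The Euclidean (ℓ²) norm of a finitely-indexed complex vector. -/
noncomputable def euclNorm {ι : Type*} [Fintype ι] (v : ι → ℂ) : ℝ :=
  ‖(WithLp.equiv 2 (ι → ℂ)).symm v‖

/-- The ℓ²→ℓ² operator norm of a complex matrix. -/
noncomputable def matOpNorm {n : Type*} [Fintype n] [DecidableEq n]
    (A : Matrix n n ℂ) : ℝ :=
  ‖Matrix.toEuclideanCLM (𝕜 := ℂ) A‖

noncomputable def repIntGen {S : Type*} [Fintype S] [DecidableEq S] {N : ℕ}
    (G : S → Matrix (Fin N) (Fin N) ℂ) :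
    Matrix (Option S × Fin N) (Option S × Fin N) ℂ :=
  ∑ α : S,
    (Matrix.single (some α) (none : Option S) (1 : ℂ) ⊗ₖ G α -
      Matrix.single (none : Option S) (some α) (1 : ℂ) ⊗ₖ (G α)ᴴ)

noncomputable def repIntR2 {S : Type*} [Fintype S] {N : ℕ}
    (G : S → Matrix (Fin N) (Fin N) ℂ) : Matrix (Fin N) (Fin N) ℂ :=
  ∑ α : S, (G α)ᴴ * G α

def e0Embed {S : Type*} {N : ℕ} (ψ : Fin N → ℂ) : Option S × Fin N → ℂ :=
  fun p => match p.1 with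
    | none => ψ p.2
    | some _ => 0

def excitedEmbed {S : Type*} {N : ℕ} (φ : S → Fin N → ℂ) : Option S × Fin N → ℂ :=
  fun p => match p.1 with
    | none => 0
    | some α => φ α p.2

/-- `Ξ := I − (1/2)R² + (1/24)(R²)²`. -/
noncomputable def repIntXi {S : Type*} [Fintype S] {N : ℕ}
    (G : S → Matrix (Fin N) (Fin N) ℂ) : Matrix (Fin N) (Fin N) ℂ :=
  1 - (1 / 2 : ℂ) • repIntR2 G + (1 / 24 : ℂ) • (repIntR2 G * repIntR2 G)

/-- `Λ := I − (1/6)R²`. -/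
noncomputable def repIntLam {S : Type*} [Fintype S] {N : ℕ}
    (G : S → Matrix (Fin N) (Fin N) ℂ) : Matrix (Fin N) (Fin N) ℂ :=
  1 - (1 / 6 : ℂ) • repIntR2 G

/-- `g := max_{α∈S} ‖G_α‖` (operator norm). -/
noncomputable def gMax {S : Type*} [Fintype S] [Nonempty S] {N : ℕ}
    (G : S → Matrix (Fin N) (Fin N) ℂ) : ℝ :=
  Finset.univ.sup' Finset.univ_nonempty fun α => matOpNorm (G α)


section AuxLemmas

lemma euclNorm_nonneg' {ι : Type*} [Fintype ι] (v : ι → ℂ) : 0 ≤ euclNorm v :=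
  norm_nonneg _

lemma matOpNorm_nonneg' {n : Type*} [Fintype n] [DecidableEq n] (A : Matrix n n ℂ) :
    0 ≤ matOpNorm A := norm_nonneg _

lemma euclNorm_mulVec_le {n : Type*} [Fintype n] [DecidableEq n]
    (A : Matrix n n ℂ) (v : n → ℂ) :
    euclNorm (A *ᵥ v) ≤ matOpNorm A * euclNorm v := by
  letI := Matrix.instL2OpMetricSpace (m := n) (n := n) (𝕜 := ℂ)
  letI := Matrix.instL2OpNormedAddCommGroup (m := n) (n := n) (𝕜 := ℂ)
  exact A.l2_opNorm_mulVec ((WithLp.equiv 2 (n → ℂ)).symm v)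

lemma matOpNorm_conjT {n : Type*} [Fintype n] [DecidableEq n] (A : Matrix n n ℂ) :
    matOpNorm Aᴴ = matOpNorm A := by
  letI := Matrix.instL2OpMetricSpace (m := n) (n := n) (𝕜 := ℂ)
  letI := Matrix.instL2OpNormedAddCommGroup (m := n) (n := n) (𝕜 := ℂ)
  exact A.l2_opNorm_conjTranspose

lemma euclNorm_sq {ι : Type*} [Fintype ι] (v : ι → ℂ) :
    euclNorm v = Real.sqrt (∑ i, ‖v i‖ ^ 2) := by
  rw [euclNorm, EuclideanSpace.norm_eq]
  simp

lemma euclNorm_e0Embed {S : Type*} [Fintype S] {N : ℕ} (ψ : Fin N → ℂ) :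
    euclNorm (e0Embed (S := S) ψ) = euclNorm ψ := by
  rw [euclNorm_sq, euclNorm_sq]
  congr 1
  rw [Fintype.sum_prod_type_right]
  simp [e0Embed, Fintype.sum_option]

lemma kron_norm_le {K : Type*} [Fintype K] [DecidableEq K] {N : ℕ} (a b : K)
    (M : Matrix (Fin N) (Fin N) ℂ) :
    matOpNorm (Matrix.single a b (1 : ℂ) ⊗ₖ M) ≤ matOpNorm M := by
  rw [matOpNorm]
  apply ContinuousLinearMap.opNorm_le_bound _ (matOpNorm_nonneg' M)
  intro x
  obtain ⟨y, rfl⟩ : ∃ y : (K × Fin N) → ℂ, (WithLp.equiv 2 ((K × Fin N) → ℂ)).symm y = x :=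
    ⟨WithLp.equiv 2 _ x, rfl⟩
  rw [WithLp.equiv_symm_apply, Matrix.toEuclideanCLM_toLp]
  have hmv : (Matrix.single a b (1 : ℂ) ⊗ₖ M) *ᵥ y
      = fun p => if p.1 = a then (M *ᵥ fun j => y (b, j)) p.2 else 0 := by
    funext p
    obtain ⟨c, i⟩ := p
    simp only [Matrix.mulVec, dotProduct, Matrix.kroneckerMap_apply, Matrix.single,
      Fintype.sum_prod_type, Matrix.of_apply]
    by_cases hc : c = a
    · subst hc
      simp [Finset.sum_ite_eq, mul_comm]
    · simp [hc, Ne.symm hc]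
  change ‖(WithLp.equiv 2 _).symm _‖ ≤ _
  rw [hmv]
  have key : ‖(WithLp.equiv 2 ((K × Fin N) → ℂ)).symm
      (fun p => if p.1 = a then (M *ᵥ fun j => y (b, j)) p.2 else 0)‖
      = euclNorm (M *ᵥ fun j => y (b, j)) := by
    show euclNorm _ = _
    rw [euclNorm_sq, euclNorm_sq]
    congr 1
    rw [Fintype.sum_prod_type]
    rw [Finset.sum_eq_single a]
    · simp
    · intro c _ hc
      simp [hc]
    · simp
  rw [key]
  refine le_trans (euclNorm_mulVec_le M _) ?_
  apply mul_le_mul_of_nonneg_left ?_ (matOpNorm_nonneg' M)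
  show euclNorm _ ≤ euclNorm y
  rw [euclNorm_sq, euclNorm_sq]
  apply Real.sqrt_le_sqrt
  rw [Fintype.sum_prod_type]
  exact Finset.single_le_sum (f := fun d => ∑ j, ‖y (d, j)‖ ^ 2)
    (fun d _ => Finset.sum_nonneg fun j _ => sq_nonneg _) (Finset.mem_univ b)

set_option maxHeartbeats 1000000 in
lemma exp_taylor_tail {𝔸 : Type*} [NormedRing 𝔸] [NormedAlgebra ℂ 𝔸] [CompleteSpace 𝔸] (A : 𝔸) :
    ‖NormedSpace.exp A - ∑ n ∈ Finset.range 5, ((n.factorial : ℂ))⁻¹ • A ^ n‖ ≤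
      ‖A‖ ^ 5 * Real.exp ‖A‖ := by
  have hsum : Summable fun n : ℕ => ((n.factorial : ℂ))⁻¹ • A ^ n :=
    NormedSpace.expSeries_summable' (𝕂 := ℂ) A
  have hexp : NormedSpace.exp A = ∑' n : ℕ, ((n.factorial : ℂ))⁻¹ • A ^ n :=
    congrFun (NormedSpace.exp_eq_tsum (𝕂 := ℂ)) A
  rw [hexp, ← hsum.sum_add_tsum_nat_add 5, add_sub_cancel_left]
  have hb : ∀ n : ℕ, ‖(((n + 5).factorial : ℂ))⁻¹ • A ^ (n + 5)‖
      ≤ ‖A‖ ^ 5 * (‖A‖ ^ n / n.factorial) := by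
    intro n
    rw [norm_smul]
    have h1 : ‖(((n + 5).factorial : ℂ))⁻¹‖ = ((n + 5).factorial : ℝ)⁻¹ := by
      simp
    rw [h1]
    have h2 : ‖A ^ (n + 5)‖ ≤ ‖A‖ ^ (n + 5) := norm_pow_le' A (by omega)
    have h3 : ((n + 5).factorial : ℝ)⁻¹ ≤ (n.factorial : ℝ)⁻¹ := by
      apply inv_anti₀
      · exact_mod_cast n.factorial_pos
      · exact_mod_cast Nat.factorial_le (by omega)
    calc ((n + 5).factorial : ℝ)⁻¹ * ‖A ^ (n + 5)‖
        ≤ (n.factorial : ℝ)⁻¹ * ‖A‖ ^ (n + 5) := by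
          apply mul_le_mul h3 h2 (norm_nonneg _) (by positivity)
      _ = ‖A‖ ^ 5 * (‖A‖ ^ n / n.factorial) := by
          rw [pow_add]; ring
  have hgsum : Summable fun n : ℕ => ‖A‖ ^ 5 * (‖A‖ ^ n / n.factorial) :=
    (Real.summable_pow_div_factorial ‖A‖).mul_left _
  calc ‖∑' n : ℕ, (((n + 5).factorial : ℂ))⁻¹ • A ^ (n + 5)‖
      ≤ ∑' n : ℕ, ‖(((n + 5).factorial : ℂ))⁻¹ • A ^ (n + 5)‖ := by
        apply norm_tsum_le_tsum_norm
        exact (summable_nat_add_iff 5).mpr (NormedSpace.norm_expSeries_summable' (𝕂 := ℂ) A)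
    _ ≤ ∑' n : ℕ, ‖A‖ ^ 5 * (‖A‖ ^ n / n.factorial) := by
        apply Summable.tsum_le_tsum hb
          ((summable_nat_add_iff 5).mpr (NormedSpace.norm_expSeries_summable' (𝕂 := ℂ) A)) hgsum
    _ = ‖A‖ ^ 5 * Real.exp ‖A‖ := by
        rw [tsum_mul_left, Real.exp_eq_exp_ℝ, NormedSpace.exp_eq_tsum_div]

variable {S : Type*} [Fintype S] [DecidableEq S] {N : ℕ}

lemma omega_e0 (G : S → Matrix (Fin N) (Fin N) ℂ) (ψ : Fin N → ℂ) :
    repIntGen G *ᵥ e0Embed ψ = excitedEmbed (fun α => G α *ᵥ ψ) := by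
  funext p
  obtain ⟨a, i⟩ := p
  simp only [repIntGen, Matrix.mulVec, Matrix.sum_apply, Matrix.sub_apply,
    Matrix.kroneckerMap_apply, Matrix.single, e0Embed, excitedEmbed, dotProduct,
    Fintype.sum_prod_type, Fintype.sum_option, Matrix.of_apply]
  cases a <;> simp [Finset.sum_comm, mul_comm]

lemma omega_exc (G : S → Matrix (Fin N) (Fin N) ℂ) (φ : S → Fin N → ℂ) :
    repIntGen G *ᵥ excitedEmbed φ = e0Embed (-(∑ α, (G α)ᴴ *ᵥ φ α)) := by
  funext p
  obtain ⟨a, i⟩ := p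
  simp only [repIntGen, Matrix.mulVec, Matrix.sum_apply, Matrix.sub_apply,
    Matrix.kroneckerMap_apply, Matrix.single, e0Embed, excitedEmbed, dotProduct,
    Fintype.sum_prod_type, Fintype.sum_option, Matrix.of_apply]
  cases a
  case none =>
    simp only [reduceCtorEq, and_true, and_false, if_false, ite_false, zero_mul, mul_zero,
      zero_sub, Finset.sum_const_zero, zero_add, Option.some.injEq, eq_self_iff_true, true_and,
      Finset.sum_neg_distrib, neg_mul, ite_mul, one_mul, zero_mul, Matrix.mulVec, dotProduct,
      Pi.neg_apply, Finset.sum_ite_eq']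
    simp [Matrix.mulVec, dotProduct]
  case some =>
    simp only [reduceCtorEq, and_true, and_false, false_and, if_false, ite_false, zero_mul,
      mul_zero, sub_zero, Finset.sum_const_zero, add_zero, Option.some.injEq, zero_sub, neg_zero,
      Finset.sum_const_zero]

lemma sum_mulVec' {K : Type*} [Fintype K] (A : K → Matrix (Fin N) (Fin N) ℂ) (x : Fin N → ℂ) :
    (∑ α, A α) *ᵥ x = ∑ α, A α *ᵥ x := by
  funext i
  simp [Matrix.mulVec, dotProduct, Matrix.sum_apply, Finset.sum_mul]
  rw [Finset.sum_comm]

lemma omega_step (G : S → Matrix (Fin N) (Fin N) ℂ) (x : Fin N → ℂ) :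
    repIntGen G *ᵥ (excitedEmbed fun α => G α *ᵥ x) = e0Embed (-(repIntR2 G *ᵥ x)) := by
  have h : ∑ α, (G α)ᴴ *ᵥ (G α *ᵥ x) = repIntR2 G *ᵥ x := by
    rw [repIntR2, sum_mulVec']
    simp [Matrix.mulVec_mulVec]
  rw [omega_exc, h]

lemma taylor_apply (G : S → Matrix (Fin N) (Fin N) ℂ) (ψ : Fin N → ℂ) :
    (∑ n ∈ Finset.range 5, ((n.factorial : ℂ))⁻¹ • repIntGen G ^ n) *ᵥ e0Embed ψ =
      e0Embed (repIntXi G *ᵥ ψ) + excitedEmbed (fun α => (G α * repIntLam G) *ᵥ ψ) := by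
  have step : ∀ (n : ℕ) (v : Option S × Fin N → ℂ),
      repIntGen G ^ (n + 1) *ᵥ v = repIntGen G *ᵥ (repIntGen G ^ n *ᵥ v) := by
    intro n v
    rw [pow_succ', Matrix.mulVec_mulVec]
  have p0 : repIntGen G ^ 0 *ᵥ e0Embed (S := S) ψ = e0Embed ψ := by
    rw [pow_zero, Matrix.one_mulVec]
  have p1 : repIntGen G ^ 1 *ᵥ e0Embed ψ = excitedEmbed (fun α => G α *ᵥ ψ) := by
    rw [step, p0, omega_e0]
  have p2 : repIntGen G ^ 2 *ᵥ e0Embed ψ = e0Embed (-(repIntR2 G *ᵥ ψ)) := by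
    rw [step, p1, omega_step]
  have p3 : repIntGen G ^ 3 *ᵥ e0Embed ψ =
      excitedEmbed (fun α => G α *ᵥ (-(repIntR2 G *ᵥ ψ))) := by
    rw [step, p2, omega_e0]
  have p4 : repIntGen G ^ 4 *ᵥ e0Embed ψ =
      e0Embed (-(repIntR2 G *ᵥ (-(repIntR2 G *ᵥ ψ)))) := by
    rw [step, p3, omega_step]
  rw [show (5 : ℕ) = 4 + 1 from rfl]
  rw [Finset.sum_range_succ, Finset.sum_range_succ, Finset.sum_range_succ,
    Finset.sum_range_succ, Finset.sum_range_succ, Finset.sum_range_zero]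
  simp only [Matrix.add_mulVec, Matrix.zero_mulVec, Matrix.smul_mulVec, zero_add]
  rw [p0, p1, p2, p3, p4]
  funext p
  obtain ⟨a, i⟩ := p
  cases a <;>
    simp [e0Embed, excitedEmbed, repIntXi, repIntLam, Matrix.add_mulVec, Matrix.sub_mulVec,
      Matrix.smul_mulVec, Matrix.one_mulVec, Matrix.mulVec_mulVec, Nat.factorial,
      Matrix.mulVec_neg, smul_eq_mul, Matrix.mul_sub, Matrix.mul_one, mul_smul_comm] <;> ring

lemma gMax_nonneg [Nonempty S] (G : S → Matrix (Fin N) (Fin N) ℂ) : 0 ≤ gMax G := by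
  obtain ⟨α⟩ := (inferInstance : Nonempty S)
  exact le_trans (matOpNorm_nonneg' (G α))
    (Finset.le_sup' (fun β => matOpNorm (G β)) (Finset.mem_univ α))

lemma omega_norm_le [Nonempty S] (G : S → Matrix (Fin N) (Fin N) ℂ) :
    matOpNorm (repIntGen G) ≤ 2 * (Fintype.card S : ℝ) * gMax G := by
  letI := Matrix.instL2OpMetricSpace (m := Option S × Fin N) (n := Option S × Fin N) (𝕜 := ℂ)
  letI := Matrix.instL2OpNormedAddCommGroup (m := Option S × Fin N) (n := Option S × Fin N)
    (𝕜 := ℂ)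
  show ‖repIntGen G‖ ≤ _
  rw [repIntGen]
  refine le_trans (norm_sum_le _ _) (le_trans (Finset.sum_le_sum
    (f := fun α => ‖Matrix.single (some α) (none : Option S) (1 : ℂ) ⊗ₖ G α -
      Matrix.single (none : Option S) (some α) (1 : ℂ) ⊗ₖ (G α)ᴴ‖)
    (g := fun _ => 2 * gMax G) ?_) ?_)
  · intro α _
    refine le_trans (norm_sub_le _ _) ?_
    have hEq : ∀ B : Matrix (Option S × Fin N) (Option S × Fin N) ℂ, ‖B‖ = matOpNorm B :=
      fun _ => rfl
    have h1 : matOpNorm (Matrix.single (some α) (none : Option S) (1 : ℂ) ⊗ₖ G α)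
        ≤ matOpNorm (G α) := kron_norm_le _ _ _
    have h2 : matOpNorm (Matrix.single (none : Option S) (some α) (1 : ℂ) ⊗ₖ (G α)ᴴ)
        ≤ matOpNorm (G α) := le_of_le_of_eq (kron_norm_le _ _ _) (matOpNorm_conjT (G α))
    have hγ : matOpNorm (G α) ≤ gMax G :=
      Finset.le_sup' (fun β => matOpNorm (G β)) (Finset.mem_univ α)
    rw [hEq, hEq]
    beta_reduce
    linarith
  · rw [Finset.sum_const, Finset.card_univ, nsmul_eq_mul]
    ring_nf
    exact le_refl _

end AuxLemmas

/-- **First-column expansion of the interaction unitary.** There is a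
constant `C > 0` depending only on `|S|` such that whenever `g := max_α ‖G_α‖ ≤ 1`,
`‖U(e_0 ⊗ ψ) − [e_0 ⊗ Ξψ + Σ_α e_α ⊗ G_α Λ ψ]‖ ≤ C g⁵ ‖ψ‖` for `U := exp(Ω)`. -/
theorem interaction_unitary_first_column (S : Type*) [Fintype S] [DecidableEq S]
    [Nonempty S] :
    ∃ C > 0, ∀ (N : ℕ) (G : S → Matrix (Fin N) (Fin N) ℂ),
      gMax G ≤ 1 → ∀ ψ : Fin N → ℂ,
        euclNorm
          ((NormedSpace.exp (repIntGen G)) *ᵥ e0Embed ψ -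
            (e0Embed (repIntXi G *ᵥ ψ) +
              excitedEmbed fun α => (G α * repIntLam G) *ᵥ ψ)) ≤
          C * gMax G ^ 5 * euclNorm ψ := by
  classical
  refine ⟨(2 * (Fintype.card S : ℝ)) ^ 5 * Real.exp (2 * (Fintype.card S : ℝ)), ?_, ?_⟩
  · have hc : (0 : ℝ) < (Fintype.card S : ℝ) := by exact_mod_cast Fintype.card_pos
    positivity
  intro N G hg ψ
  have hg0 : 0 ≤ gMax G := gMax_nonneg G
  have hc0 : (0 : ℝ) ≤ (Fintype.card S : ℝ) := Nat.cast_nonneg _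
  letI := Matrix.instL2OpMetricSpace (m := Option S × Fin N) (n := Option S × Fin N) (𝕜 := ℂ)
  letI := Matrix.instL2OpNormedAddCommGroup (m := Option S × Fin N) (n := Option S × Fin N)
    (𝕜 := ℂ)
  letI := Matrix.instL2OpNormedRing (n := Option S × Fin N) (𝕜 := ℂ)
  letI := Matrix.instL2OpNormedSpace (m := Option S × Fin N) (n := Option S × Fin N) (𝕜 := ℂ)
  letI := Matrix.instL2OpNormedAlgebra (n := Option S × Fin N) (𝕜 := ℂ)
  haveI : CompleteSpace (Matrix (Option S × Fin N) (Option S × Fin N) ℂ) :=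
    FiniteDimensional.complete ℂ _
  set Ω := repIntGen G with hΩdef
  set T := ∑ n ∈ Finset.range 5, ((n.factorial : ℂ))⁻¹ • Ω ^ n with hTdef
  have hid : (NormedSpace.exp Ω) *ᵥ e0Embed ψ -
      (e0Embed (repIntXi G *ᵥ ψ) + excitedEmbed fun α => (G α * repIntLam G) *ᵥ ψ) =
      (NormedSpace.exp Ω - T) *ᵥ e0Embed ψ := by
    rw [Matrix.sub_mulVec, hTdef, hΩdef, taylor_apply]
  rw [hid]
  have h1 : euclNorm ((NormedSpace.exp Ω - T) *ᵥ e0Embed ψ) ≤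
      matOpNorm (NormedSpace.exp Ω - T) * euclNorm (e0Embed (S := S) ψ) :=
    euclNorm_mulVec_le _ _
  rw [euclNorm_e0Embed] at h1
  have h2 : matOpNorm (NormedSpace.exp Ω - T) ≤
      matOpNorm Ω ^ 5 * Real.exp (matOpNorm Ω) := exp_taylor_tail Ω
  have hΩb : matOpNorm Ω ≤ 2 * (Fintype.card S : ℝ) * gMax G := omega_norm_le G
  have hΩ1 : matOpNorm Ω ≤ 2 * (Fintype.card S : ℝ) := by nlinarith
  have h3 : matOpNorm Ω ^ 5 ≤ (2 * (Fintype.card S : ℝ)) ^ 5 * gMax G ^ 5 := by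
    calc matOpNorm Ω ^ 5 ≤ (2 * (Fintype.card S : ℝ) * gMax G) ^ 5 :=
          pow_le_pow_left₀ (matOpNorm_nonneg' _) hΩb 5
      _ = (2 * (Fintype.card S : ℝ)) ^ 5 * gMax G ^ 5 := by ring
  have h4 : Real.exp (matOpNorm Ω) ≤ Real.exp (2 * (Fintype.card S : ℝ)) :=
    Real.exp_le_exp.mpr hΩ1
  refine le_trans h1 ?_
  have h5 : matOpNorm (NormedSpace.exp Ω - T) ≤
      (2 * (Fintype.card S : ℝ)) ^ 5 * gMax G ^ 5 * Real.exp (2 * (Fintype.card S : ℝ)) := by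
    refine le_trans h2 (mul_le_mul h3 h4 (Real.exp_pos _).le ?_)
    positivity
  calc matOpNorm (NormedSpace.exp Ω - T) * euclNorm ψ
      ≤ ((2 * (Fintype.card S : ℝ)) ^ 5 * gMax G ^ 5 *
          Real.exp (2 * (Fintype.card S : ℝ))) * euclNorm ψ :=
        mul_le_mul_of_nonneg_right h5 (euclNorm_nonneg' ψ)
    _ = (2 * (Fintype.card S : ℝ)) ^ 5 * Real.exp (2 * (Fintype.card S : ℝ)) *
          gMax G ^ 5 * euclNorm ψ := by ring
end
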